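/- For every h = 1,…,n, among all symmetric tridiagonal Toeplitz matrices S = (n; d, s) whose h-th eigenvalue is zero (i.e., d + 2s cos(hπ/(n+1)) = 0), the matrix S*^𝒯 = (n; δ*, σ*) with c = cos(hπ/(n+1)), δ* = 2(n c² δ − (n−1) c σ)/(n−1+2n c²), σ* = ((n−1)σ − n c δ)/(n−1+2n c²) is the unique minimizer of ‖T − S‖_F. -/

import Mathlib

open Real Filter

noncomputable def tridiag (n : ℕ) (d s : ℝ) : Matrix (Fin n) (Fin n) ℝ :=
  Matrix.of fun i j =>
    if (i : ℕ) = (j : ℕ) then d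
    else if (i : ℕ) + 1 = (j : ℕ) ∨ (j : ℕ) + 1 = (i : ℕ) then s else 0

noncomputable def lam (n : ℕ) (δ σ : ℝ) (h : ℕ) : ℝ :=
  δ + 2 * σ * Real.cos (h * Real.pi / (n + 1))

noncomputable def kap (n h : ℕ) : ℝ :=
  Real.sqrt (1 / (n : ℝ) + 2 / ((n : ℝ) - 1) * Real.cos (h * Real.pi / (n + 1)) ^ 2)

noncomputable def evec (n h : ℕ) : Fin n → ℝ :=
  fun k => Real.sqrt (2 / (n + 1)) * Real.sin (h * (k.1 + 1) * Real.pi / (n + 1))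

noncomputable def frobNorm {n : ℕ} (A : Matrix (Fin n) (Fin n) ℝ) : ℝ :=
  Real.sqrt (∑ i, ∑ j, A i j ^ 2)


lemma tridiag_sub (n : ℕ) (a b d s : ℝ) :
    tridiag n a b - tridiag n d s = tridiag n (a - d) (b - s) := by
  ext i j
  simp only [tridiag, Matrix.sub_apply, Matrix.of_apply]
  split_ifs <;> ring

lemma sumSq (n : ℕ) (hn : 1 ≤ n) (a b : ℝ) :
    ∑ i : Fin n, ∑ j : Fin n, (tridiag n a b i j) ^ 2
      = (n : ℝ) * a ^ 2 + 2 * ((n : ℝ) - 1) * b ^ 2 := by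
  have key : ∀ i j : Fin n, (tridiag n a b i j) ^ 2
      = (if (i : ℕ) = (j : ℕ) then a ^ 2 else 0)
        + (if (i : ℕ) + 1 = (j : ℕ) then b ^ 2 else 0)
        + (if (j : ℕ) + 1 = (i : ℕ) then b ^ 2 else 0) := by
    intro i j
    simp only [tridiag, Matrix.of_apply]
    split_ifs <;> first | omega | ring
  simp only [key, Finset.sum_add_distrib]
  have e1 : ∑ i : Fin n, ∑ j : Fin n, (if (i : ℕ) = (j : ℕ) then a ^ 2 else 0)
      = (n : ℝ) * a ^ 2 := by
    have : ∀ i : Fin n, ∑ j : Fin n, (if (i : ℕ) = (j : ℕ) then a ^ 2 else 0) = a ^ 2 := by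
      intro i
      rw [Finset.sum_eq_single i]
      · simp
      · intro j _ hj
        simp [fun hij : (i:ℕ) = (j:ℕ) => hj (Fin.ext hij.symm)]
        intro hij; exact absurd (Fin.ext hij) (fun hh => hj hh.symm)
      · simp
    simp [this, Finset.sum_const, mul_comm]
  have count : ∀ f : ℕ → ℕ → Prop, ∀ _ : DecidablePred fun p : ℕ × ℕ => f p.1 p.2, True := fun _ _ => trivial
  have e2 : ∑ i : Fin n, ∑ j : Fin n, (if (i : ℕ) + 1 = (j : ℕ) then b ^ 2 else 0)
      = ((n : ℝ) - 1) * b ^ 2 := by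
    have inner : ∀ i : Fin n, ∑ j : Fin n, (if (i : ℕ) + 1 = (j : ℕ) then b ^ 2 else 0)
        = (if (i : ℕ) + 1 < n then b ^ 2 else 0) := by
      intro i
      by_cases hlt : (i : ℕ) + 1 < n
      · rw [Finset.sum_eq_single (⟨(i : ℕ) + 1, hlt⟩ : Fin n)]
        · simp [hlt]
        · intro j _ hj
          have : (i : ℕ) + 1 ≠ (j : ℕ) := by
            intro he; exact hj (Fin.ext he.symm)
          simp [this]
        · simp
      · rw [Finset.sum_eq_zero, if_neg hlt]
        intro j _
        have : (i : ℕ) + 1 ≠ (j : ℕ) := by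
          have := j.isLt; omega
        simp [this]
    simp only [inner]
    rw [Fin.sum_univ_eq_sum_range (fun i => if i + 1 < n then b ^ 2 else 0)]
    rw [← Finset.sum_filter]
    have hf : (Finset.range n).filter (fun i => i + 1 < n) = Finset.range (n - 1) := by
      ext i; simp; omega
    rw [hf]
    rw [Finset.sum_const, Finset.card_range, nsmul_eq_mul, Nat.cast_sub hn]
    push_cast; ring
  have e3 : ∑ i : Fin n, ∑ j : Fin n, (if (j : ℕ) + 1 = (i : ℕ) then b ^ 2 else 0)
      = ((n : ℝ) - 1) * b ^ 2 := by
    rw [Finset.sum_comm]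
    have inner : ∀ j : Fin n, ∑ i : Fin n, (if (j : ℕ) + 1 = (i : ℕ) then b ^ 2 else 0)
        = (if (j : ℕ) + 1 < n then b ^ 2 else 0) := by
      intro j
      by_cases hlt : (j : ℕ) + 1 < n
      · rw [Finset.sum_eq_single (⟨(j : ℕ) + 1, hlt⟩ : Fin n)]
        · simp [hlt]
        · intro i _ hi
          have : (j : ℕ) + 1 ≠ (i : ℕ) := by
            intro he; exact hi (Fin.ext he.symm)
          simp [this]
        · simp
      · rw [Finset.sum_eq_zero, if_neg hlt]
        intro i _
        have : (j : ℕ) + 1 ≠ (i : ℕ) := by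
          have := i.isLt; omega
        simp [this]
    simp only [inner]
    rw [Fin.sum_univ_eq_sum_range (fun i => if i + 1 < n then b ^ 2 else 0)]
    rw [← Finset.sum_filter]
    have hf : (Finset.range n).filter (fun i => i + 1 < n) = Finset.range (n - 1) := by
      ext i; simp; omega
    rw [hf]
    rw [Finset.sum_const, Finset.card_range, nsmul_eq_mul, Nat.cast_sub hn]
    push_cast; ring
  rw [e1, e2, e3]; ring


/-- among all symmetric tridiagonal Toeplitz matrices `(n; d, s)` whose `h`-th
eigenvalue vanishes (`d + 2sc = 0`), the matrix `S*^𝒯 = (n; δ*, σ*)` is the unique minimizer of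
the Frobenius distance to `T`. -/
theorem stmt_5 (n : ℕ) (hn : 2 ≤ n) (δ σ : ℝ) (h : ℕ) (h1 : 1 ≤ h) (hh : h ≤ n)
    (c δs σs : ℝ) (hc : c = Real.cos (h * Real.pi / (n + 1)))
    (hδs : δs = 2 * ((n : ℝ) * c ^ 2 * δ - ((n : ℝ) - 1) * c * σ) /
      ((n : ℝ) - 1 + 2 * (n : ℝ) * c ^ 2))
    (hσs : σs = (((n : ℝ) - 1) * σ - (n : ℝ) * c * δ) /
      ((n : ℝ) - 1 + 2 * (n : ℝ) * c ^ 2)) :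
    δs + 2 * σs * c = 0 ∧
    (∀ d s : ℝ, d + 2 * s * c = 0 →
      frobNorm (tridiag n δ σ - tridiag n δs σs) ≤
        frobNorm (tridiag n δ σ - tridiag n d s)) ∧
    (∀ d s : ℝ, d + 2 * s * c = 0 →
      frobNorm (tridiag n δ σ - tridiag n d s) =
        frobNorm (tridiag n δ σ - tridiag n δs σs) →
      d = δs ∧ s = σs) := by
  have hn1 : 1 ≤ n := by omega
  have hnR : (2 : ℝ) ≤ (n : ℝ) := by exact_mod_cast hn
  have hD : 0 < (n : ℝ) - 1 + 2 * (n : ℝ) * c ^ 2 := by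
    have : (0:ℝ) ≤ 2 * (n : ℝ) * c ^ 2 := by positivity
    nlinarith
  have hDne : (n : ℝ) - 1 + 2 * (n : ℝ) * c ^ 2 ≠ 0 := ne_of_gt hD
  have part1 : δs + 2 * σs * c = 0 := by
    rw [hδs, hσs]
    field_simp
    ring
  have fn : ∀ d s : ℝ, frobNorm (tridiag n δ σ - tridiag n d s)
      = Real.sqrt ((n : ℝ) * (δ - d) ^ 2 + 2 * ((n : ℝ) - 1) * (σ - s) ^ 2) := by
    intro d s
    rw [frobNorm, tridiag_sub, sumSq n hn1]
  have hkey : ∀ s : ℝ,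
      (n : ℝ) * (δ - (-(2 * s * c))) ^ 2 + 2 * ((n : ℝ) - 1) * (σ - s) ^ 2
        = ((n : ℝ) * (δ - δs) ^ 2 + 2 * ((n : ℝ) - 1) * (σ - σs) ^ 2)
          + 2 * ((n : ℝ) - 1 + 2 * (n : ℝ) * c ^ 2) * (s - σs) ^ 2 := by
    intro s
    rw [hδs, hσs]
    rw [sub_div' hDne, sub_div' hDne, sub_div' hDne, div_pow, div_pow, div_pow,
      mul_div_assoc', mul_div_assoc', mul_div_assoc', ← add_div, ← add_div,
      eq_div_iff (pow_ne_zero 2 hDne)]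
    ring
  have hnonneg : ∀ d s : ℝ,
      (0:ℝ) ≤ (n : ℝ) * (δ - d) ^ 2 + 2 * ((n : ℝ) - 1) * (σ - s) ^ 2 := by
    intro d s
    have ha : (0:ℝ) ≤ (n : ℝ) * (δ - d) ^ 2 := by positivity
    have hb : (0:ℝ) ≤ 2 * ((n : ℝ) - 1) * (σ - s) ^ 2 := by nlinarith [sq_nonneg (σ - s)]
    linarith
  refine ⟨part1, ?_, ?_⟩
  · intro d s hds
    have hd : d = -(2 * s * c) := by linarith
    have hδseq : δs = -(2 * σs * c) := by linarith
    rw [fn, fn, hd]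
    apply Real.sqrt_le_sqrt
    have h1 := hkey s
    nlinarith [sq_nonneg (s - σs), hD.le]
  · intro d s hds heq
    have hd : d = -(2 * s * c) := by linarith
    have hδseq : δs = -(2 * σs * c) := by linarith
    rw [fn, fn] at heq
    have hargs : (n : ℝ) * (δ - d) ^ 2 + 2 * ((n : ℝ) - 1) * (σ - s) ^ 2
        = (n : ℝ) * (δ - δs) ^ 2 + 2 * ((n : ℝ) - 1) * (σ - σs) ^ 2 :=
      (Real.sqrt_inj (hnonneg d s) (hnonneg δs σs)).mp heq
    rw [hd, hkey s] at hargs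
    have hzero : 2 * ((n : ℝ) - 1 + 2 * (n : ℝ) * c ^ 2) * (s - σs) ^ 2 = 0 := by
      linarith
    have hsσ : s = σs := by
      have h2 : (s - σs) ^ 2 = 0 := by
        rcases mul_eq_zero.mp hzero with h' | h'
        · exact absurd h' (by positivity)
        · exact h'
      nlinarith [h2]
    refine ⟨?_, hsσ⟩
    rw [hd, hsσ, ← hδseq]
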